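/- Let f : ℝ^d → ℝ be convex with minimizer x*, ‖x*‖ ≤ R, and suppose all subgradients satisfy ‖∇f(x)‖ ≤ M₀ + M₁(f(x) - f*). For the projected subgradient step x' = proj_{Q_R}(x - η∇f(x)) with η > 0 and F = max_{Q_R}(f - f*), if x ∈ Q_R then ½‖x' - x*‖² ≤ ½‖x - x*‖² - η(f(x) - f*) + η²M₀² + η²M₁²F(f(x) - f*). In particular, if 2η M₁² F ≤ 1 then ½‖x' - x*‖² ≤ ½‖x - x*‖² - (η/2)(f(x) - f*) + η²M₀². -/

import Mathlib

open Real
open scoped RealInnerProductSpace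

/-- Euclidean projection onto the closed ball of radius `R` centered at the origin. -/
noncomputable def projR {d : ℕ} (R : ℝ) (y : EuclideanSpace ℝ (Fin d)) :
    EuclideanSpace ℝ (Fin d) :=
  (min 1 (R / ‖y‖)) • y

lemma projR_nonexpansive_fixed {d : ℕ} {R : ℝ} (xstar : EuclideanSpace ℝ (Fin d))
    (hxs : ‖xstar‖ ≤ R) (y : EuclideanSpace ℝ (Fin d)) :
    ‖projR R y - xstar‖ ≤ ‖y - xstar‖ := by
  by_cases hy : ‖y‖ ≤ R
  · rcases eq_or_ne y 0 with rfl | hy0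
    · simp [projR]
    · have : R / ‖y‖ ≥ 1 := (one_le_div (norm_pos_iff.mpr hy0)).mpr hy
      simp [projR, min_eq_left this]
  · push_neg at hy
    set t : ℝ := R / ‖y‖ with ht
    have hny : (0:ℝ) < ‖y‖ := lt_of_le_of_lt (le_trans (norm_nonneg _) hxs) hy
    have hR : 0 ≤ R := le_trans (norm_nonneg _) hxs
    have ht0 : 0 ≤ t := div_nonneg hR hny.le
    have ht1 : t < 1 := (div_lt_one hny).mpr hy
    have htny : t * ‖y‖ = R := div_mul_cancel₀ R hny.ne'
    have hproj : projR R y = t • y := by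
      rw [projR, ← ht, min_eq_right ht1.le]
    have hip : ⟪y, xstar⟫ ≤ ‖y‖ * ‖xstar‖ := real_inner_le_norm y xstar
    have hsq : ‖t • y - xstar‖ ^ 2 ≤ ‖y - xstar‖ ^ 2 := by
      have e1 : ‖t • y - xstar‖ ^ 2 =
          t ^ 2 * ‖y‖ ^ 2 - 2 * (t * ⟪y, xstar⟫) + ‖xstar‖ ^ 2 := by
        rw [norm_sub_sq_real, real_inner_smul_left, norm_smul, Real.norm_eq_abs,
          abs_of_nonneg ht0]
        ring
      have e2 : ‖y - xstar‖ ^ 2 = ‖y‖ ^ 2 - 2 * ⟪y, xstar⟫ + ‖xstar‖ ^ 2 := by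
        rw [norm_sub_sq_real]
      rw [e1, e2]
      nlinarith [sq_nonneg (1 - t), norm_nonneg xstar, sq_nonneg (‖y‖ - ‖xstar‖)]
    rw [hproj]
    have h := Real.sqrt_le_sqrt hsq
    rwa [Real.sqrt_sq (norm_nonneg _), Real.sqrt_sq (norm_nonneg _)] at h

theorem projected_subgradient_one_step {d : ℕ}
    (f : EuclideanSpace ℝ (Fin d) → ℝ)
    (g : EuclideanSpace ℝ (Fin d) → EuclideanSpace ℝ (Fin d))
    (xstar x x' : EuclideanSpace ℝ (Fin d)) (R M₀ M₁ F η : ℝ)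
    (hconv : ConvexOn ℝ Set.univ f)
    (hmin : ∀ y, f xstar ≤ f y) (hxs : ‖xstar‖ ≤ R)
    (hM₀ : 0 ≤ M₀) (hM₁ : 0 ≤ M₁)
    (hsub : ∀ z y, f z + ⟪g z, y - z⟫ ≤ f y)
    (hgb : ∀ z, ‖g z‖ ≤ M₀ + M₁ * (f z - f xstar))
    (hF : F = sSup ((fun z => f z - f xstar) '' Metric.closedBall 0 R))
    (hη : 0 < η) (hx : x ∈ Metric.closedBall (0 : EuclideanSpace ℝ (Fin d)) R)
    (hstep : x' = projR R (x - η • g x)) :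
    (1 / 2 : ℝ) * ‖x' - xstar‖ ^ 2 ≤
      1 / 2 * ‖x - xstar‖ ^ 2 - η * (f x - f xstar) +
        η ^ 2 * M₀ ^ 2 + η ^ 2 * M₁ ^ 2 * F * (f x - f xstar) ∧
    (2 * η * M₁ ^ 2 * F ≤ 1 →
      (1 / 2 : ℝ) * ‖x' - xstar‖ ^ 2 ≤
        1 / 2 * ‖x - xstar‖ ^ 2 - η / 2 * (f x - f xstar) + η ^ 2 * M₀ ^ 2) := by
  set D : ℝ := f x - f xstar with hD
  have hD0 : 0 ≤ D := sub_nonneg.mpr (hmin x)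
  -- continuity of f and boundedness on the ball
  have hcont : Continuous f :=
    continuousOn_univ.mp (hconv.continuousOn isOpen_univ)
  have hcomp : IsCompact ((fun z => f z - f xstar) '' Metric.closedBall
      (0 : EuclideanSpace ℝ (Fin d)) R) :=
    (isCompact_closedBall _ _).image (by fun_prop)
  have hDF : D ≤ F := by
    rw [hF]
    exact le_csSup hcomp.bddAbove ⟨x, hx, rfl⟩
  -- subgradient inequality
  have hsg : D ≤ ⟪g x, x - xstar⟫ := by
    have := hsub x xstar
    have h2 : ⟪g x, xstar - x⟫ = -⟪g x, x - xstar⟫ := by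
      rw [← inner_neg_right]; congr 1; abel
    rw [h2] at this; linarith
  -- expansion
  have hgbx := hgb x
  rw [← hD] at hgbx
  clear_value D
  have key : (1/2:ℝ) * ‖x - η • g x - xstar‖ ^ 2 ≤
      1 / 2 * ‖x - xstar‖ ^ 2 - η * D + η ^ 2 * M₀ ^ 2 + η ^ 2 * M₁ ^ 2 * F * D := by
    have e : ‖x - η • g x - xstar‖ ^ 2 =
        ‖x - xstar‖ ^ 2 - 2 * (η * ⟪g x, x - xstar⟫) + η ^ 2 * ‖g x‖ ^ 2 := by
      have : x - η • g x - xstar = (x - xstar) - η • g x := by abel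
      rw [this, norm_sub_sq_real, real_inner_smul_right, norm_smul,
        Real.norm_eq_abs, abs_of_nonneg hη.le, real_inner_comm]
      ring
    have hg2 : ‖g x‖ ^ 2 ≤ 2 * M₀ ^ 2 + 2 * M₁ ^ 2 * D ^ 2 := by
      nlinarith [norm_nonneg (g x), mul_nonneg hM₁ hD0, sq_nonneg (M₀ - M₁ * D),
        mul_nonneg hM₀ (mul_nonneg hM₁ hD0)]
    have hDF2 : M₁ ^ 2 * D ^ 2 ≤ M₁ ^ 2 * F * D := by
      nlinarith [mul_le_mul_of_nonneg_left (mul_le_mul_of_nonneg_right hDF hD0)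
        (sq_nonneg M₁)]
    rw [e]
    nlinarith [mul_le_mul_of_nonneg_left hsg hη.le,
      mul_le_mul_of_nonneg_left hg2 (by positivity : (0:ℝ) ≤ η ^ 2 / 2),
      mul_le_mul_of_nonneg_left hDF2 (sq_nonneg η)]
  have hne : ‖x' - xstar‖ ≤ ‖x - η • g x - xstar‖ := by
    rw [hstep]; exact projR_nonexpansive_fixed xstar hxs _
  have hsq : ‖x' - xstar‖ ^ 2 ≤ ‖x - η • g x - xstar‖ ^ 2 :=
    pow_le_pow_left₀ (norm_nonneg _) hne 2
  constructor
  · linarith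
  · intro hsmall
    have : η ^ 2 * M₁ ^ 2 * F * D ≤ η / 2 * D := by
      have : 2 * η * M₁ ^ 2 * F * D ≤ 1 * D :=
        mul_le_mul_of_nonneg_right hsmall hD0
      nlinarith [mul_le_mul_of_nonneg_left this (by positivity : (0:ℝ) ≤ η / 2)]
    linarith
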